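/- For all m, n ∈ ℤ and every basis vector w = v_{S,T} ⊗ e^{pα} of Ω, all but finitely many terms of the sums Σ_{k≥0} Z⁻(m−k)Z⁻(n+k)w and Σ_{k≥0} Z⁻(n−k)Z⁻(m+k)w vanish, and the two sums are equal. (This is the componentwise form of the generalized commutator relation Z⁻(z)Z⁻(w)(1−w/z)^{−1} − Z⁻(w)Z⁻(z)(1−z/w)^{−1} = 0 of the Z-algebra representation π_Ω.) -/

import Mathlib

open MvPolynomial

/-- The semi-infinite wedge space `Λ`: complex vector space with basis `v_{S,T}`
indexed by pairs `(S, T)` of finite subsets of the positive integers.  The basis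
vector `v_{S,T}` encodes the semi-infinite wedge product with support
`supp(S,T) = {-s-1/2 : s ∈ S} ∪ {-1/2} ∪ {k+1/2 : k ∈ ℤ_{≥1}, k ∉ T} ⊆ ℤ + 1/2`. -/
abbrev Wedge : Type := (Finset ℕ+ × Finset ℕ+) →₀ ℂ

/-- Image of the basis vector `v_{S,T}` under the operator `A(m)` (for `m ∈ ℤ + 1/2`,
i.e. a rational with denominator `2`; `A(m) := 0` for other rationals).
`A(m) v_{S,T} = 0` if `m ∈ supp(S,T)` or `m = 1/2`; otherwise
`A(m) v_{S,T} = (m - 1/2) ⬝ (-1)^j ⬝ v_{S',T'}` where `j = #{i ∈ supp(S,T) : i < m}`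
and `supp(S',T') = supp(S,T) ∪ {m}`.  Writing `m = n + 1/2` with `n = ⌊m⌋ ∈ ℤ`:
if `n ≥ 1` then `m ∈ supp(S,T)` iff `n ∉ T`, and the new support corresponds to
`(S, T \ {n})` with sign exponent `j = |S| + n - #{t ∈ T : t < n}`;
if `n ≤ -2` then `m = -s - 1/2` with `s = -n-1 ≥ 1`, `m ∈ supp(S,T)` iff `s ∈ S`,
and the new support corresponds to `(S ∪ {s}, T)` with `j = #{s' ∈ S : s' > s}`;
if `n = 0` (`m = 1/2`) or `n = -1` (`m = -1/2 ∈ supp(S,T)`) the result is `0`. -/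
noncomputable def Abasis (m : ℚ) (ST : Finset ℕ+ × Finset ℕ+) : Wedge :=
  if m.den = 2 then
    let n : ℤ := ⌊m⌋
    if hn : 1 ≤ n then
      let k : ℕ+ := ⟨n.toNat, by omega⟩
      if k ∈ ST.2 then
        (((n : ℂ)) * (-1) ^ (ST.1.card + n.toNat - (ST.2.filter (· < k)).card)) •
          Finsupp.single (ST.1, ST.2.erase k) (1 : ℂ)
      else 0
    else if hn' : n ≤ -2 then
      let s : ℕ+ := ⟨(-n - 1).toNat, by omega⟩
      if s ∈ ST.1 then 0
      else
        (((n : ℂ)) * (-1) ^ ((ST.1.filter (s < ·)).card)) •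
          Finsupp.single (insert s ST.1, ST.2) (1 : ℂ)
    else 0
  else 0

/-- Image of the basis vector `v_{S,T}` under the operator `A*(m)` (for `m ∈ ℤ + 1/2`).
`A*(m) v_{S,T} = 0` if `-m ∉ supp(S,T)` or `m = 1/2`; otherwise
`A*(m) v_{S,T} = (m - 1/2) ⬝ (-1)^{j'} ⬝ v_{S'',T''}` where
`j' = #{i ∈ supp(S,T) : i < -m}` and `supp(S'',T'') = supp(S,T) \ {-m}`.
Writing `m = n + 1/2`, `n = ⌊m⌋`: if `n ≥ 1` then `-m = -n - 1/2 ∈ supp(S,T)` iff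
`n ∈ S`, new pair `(S \ {n}, T)`, `j' = #{s' ∈ S : s' > n}`; if `n ≤ -2` then
`-m = k + 1/2` with `k = -n-1 ≥ 1`, `-m ∈ supp(S,T)` iff `k ∉ T`, new pair
`(S, T ∪ {k})`, `j' = |S| + k - #{t ∈ T : t < k}`; otherwise `0`. -/
noncomputable def AstarBasis (m : ℚ) (ST : Finset ℕ+ × Finset ℕ+) : Wedge :=
  if m.den = 2 then
    let n : ℤ := ⌊m⌋
    if hn : 1 ≤ n then
      let s : ℕ+ := ⟨n.toNat, by omega⟩
      if s ∈ ST.1 then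
        (((n : ℂ)) * (-1) ^ ((ST.1.filter (s < ·)).card)) •
          Finsupp.single (ST.1.erase s, ST.2) (1 : ℂ)
      else 0
    else if hn' : n ≤ -2 then
      let k : ℕ+ := ⟨(-n - 1).toNat, by omega⟩
      if k ∈ ST.2 then 0
      else
        (((n : ℂ)) * (-1) ^ (ST.1.card + (-n - 1).toNat - (ST.2.filter (· < k)).card)) •
          Finsupp.single (ST.1, insert k ST.2) (1 : ℂ)
    else 0
  else 0

/-- The operator `A(m)` on the semi-infinite wedge space `Λ`, extended linearly. -/
noncomputable def Aop (m : ℚ) : Wedge →ₗ[ℂ] Wedge :=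
  Finsupp.lsum ℂ fun ST => LinearMap.toSpanSingleton ℂ Wedge (Abasis m ST)

/-- The operator `A*(m)` on the semi-infinite wedge space `Λ`, extended linearly. -/
noncomputable def AstarOp (m : ℚ) : Wedge →ₗ[ℂ] Wedge :=
  Finsupp.lsum ℂ fun ST => LinearMap.toSpanSingleton ℂ Wedge (AstarBasis m ST)

/-- The Fock space `F = ℂ[x_1, x_2, ...]`, a polynomial ring in countably many
variables indexed by the positive integers. -/
abbrev Fock : Type := MvPolynomial ℕ+ ℂ

/-- Endomorphisms of the Fock space. -/
abbrev EndF : Type := Module.End ℂ Fock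

/-- The Heisenberg operators on the Fock space: `H(-n)` is multiplication by `x_n`
and `H(n) = -4n ∂/∂x_n` for `n ≥ 1` (and `0` for `n = 0`, which is never used). -/
noncomputable def HF (n : ℤ) : EndF :=
  if hn : 1 ≤ n then ((-4 : ℂ) * (n : ℂ)) • (pderiv (⟨n.toNat, by omega⟩ : ℕ+)).toLinearMap
  else if hn' : n ≤ -1 then LinearMap.mulLeft ℂ (X (⟨(-n).toNat, by omega⟩ : ℕ+))
  else 0

/-- `sgn true = -1`, `sgn false = 1`: the sign `∓` attached to the label `ε ∈ {+, -}`
(`ε = +` is `true`), as in `E^±_+(z) = exp(∓ Σ_{n>0} x_n z^n / (2n))`. -/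
def sgn (ε : Bool) : ℂ := if ε then -1 else 1

/-- The coefficient of `z^k` in the exponential `exp(g(z)) = Σ_j g(z)^j / j!` of an
operator-valued formal power series `g` (with zero constant term, so that only the
terms `j ≤ k` contribute to the coefficient of `z^k`). -/
noncomputable def expCoeff (g : PowerSeries EndF) (k : ℕ) : EndF :=
  ∑ j ∈ Finset.range (k + 1), ((j.factorial : ℂ))⁻¹ • (PowerSeries.coeff (R := EndF) k (g ^ j))

/-- The series `∓ Σ_{n > 0} x_n z^n / (2n)` (multiplication operators). -/
noncomputable def dSeries (ε : Bool) : PowerSeries EndF :=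
  PowerSeries.mk fun n =>
    if hn : 0 < n then sgn ε • (((2 * n : ℂ))⁻¹ • LinearMap.mulLeft ℂ (X (⟨n, hn⟩ : ℕ+)))
    else 0

/-- The series `∓ 2 Σ_{n > 0} (∂/∂x_n) w^n`, where `w` stands for `z^{-1}`. -/
noncomputable def cSeries (ε : Bool) : PowerSeries EndF :=
  PowerSeries.mk fun n =>
    if hn : 0 < n then sgn ε • ((2 : ℂ) • (pderiv (⟨n, hn⟩ : ℕ+)).toLinearMap)
    else 0

/-- `d^ε_l`, the coefficient of `z^l` in `E^ε_+(z) = exp(∓ Σ_{n>0} x_n z^n/(2n))`. -/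
noncomputable def dOp (ε : Bool) (l : ℕ) : EndF := expCoeff (dSeries ε) l

/-- `c^ε_k`, the coefficient of `z^{-k}` in `E^ε_-(z) = exp(∓ 2 Σ_{n>0} (∂/∂x_n) z^{-n})`. -/
noncomputable def cOp (ε : Bool) (k : ℕ) : EndF := expCoeff (cSeries ε) k

/-- The space `V = F ⊗ Λ ⊗ ℂ[ℤα]`, realized as finitely supported functions from
the basis `{v_{S,T} ⊗ e^{pα}}` of `Λ ⊗ ℂ[ℤα]` to the Fock space `F`:
the index `((S,T), p)` records the basis vector `v_{S,T} ⊗ e^{pα}` and the value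
is the `F`-coordinate, so `Finsupp.single ((S,T), p) f` is `f ⊗ v_{S,T} ⊗ e^{pα}`. -/
abbrev VV : Type := ((Finset ℕ+ × Finset ℕ+) × ℤ) →₀ Fock

/-- `emb w p f` is the element `f ⊗ w ⊗ e^{pα}` of `V` for `w ∈ Λ`. -/
noncomputable def emb (w : Wedge) (p : ℤ) (f : Fock) : VV :=
  w.sum fun ST c => Finsupp.single (ST, p) (c • f)

/-- The operator `X(m)` of the representation `π` on `V`:
`X(m)(f ⊗ v_{S,T} ⊗ e^{pα}) = Σ_{l,k ≥ 0} (d^+_l c^+_k f) ⊗ A(m+l-k-p-1/2) v_{S,T} ⊗ e^{(p+1)α}`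
(only finitely many summands are nonzero on each vector). -/
noncomputable def Xop (m : ℤ) : VV → VV := fun u =>
  u.sum fun STp f =>
    ∑ᶠ lk : ℕ × ℕ,
      emb (Abasis ((m : ℚ) + lk.1 - lk.2 - STp.2 - 1/2) STp.1) (STp.2 + 1)
        (dOp true lk.1 (cOp true lk.2 f))

/-- The operator `Y(m)` of the representation `π` on `V`:
`Y(m)(f ⊗ v_{S,T} ⊗ e^{pα}) = Σ_{l,k ≥ 0} (d^-_l c^-_k f) ⊗ A*(m+l-k+p-1/2) v_{S,T} ⊗ e^{(p-1)α}`. -/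
noncomputable def Yop (m : ℤ) : VV → VV := fun u =>
  u.sum fun STp f =>
    ∑ᶠ lk : ℕ × ℕ,
      emb (AstarBasis ((m : ℚ) + lk.1 - lk.2 + STp.2 - 1/2) STp.1) (STp.2 - 1)
        (dOp false lk.1 (cOp false lk.2 f))

/-- The operator `H(m)` of the representation `π` on `V`: for `m ≠ 0` it acts as
`H(m)` on the Fock factor, and `H(0)` acts on `f ⊗ v ⊗ e^{pα}` by the scalar `2p`. -/
noncomputable def HVop (m : ℤ) : VV → VV := fun u =>
  u.sum fun STp f =>
    Finsupp.single STp (if m = 0 then ((2 : ℂ) * (STp.2 : ℂ)) • f else HF m f)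

/-- The weight of a monomial `x₁^{a₁} x₂^{a₂} ⋯`, namely `Σ n aₙ`. -/
def wtMon (μ : ℕ+ →₀ ℕ) : ℚ := μ.sum fun n a => (n : ℚ) * a

/-- The degree of the basis vector `v_{S,T}` of `Λ`: `Σ_{s∈S} s + Σ_{t∈T} t`. -/
def degWedge (ST : Finset ℕ+ × Finset ℕ+) : ℚ :=
  (∑ s ∈ ST.1, (s : ℚ)) + ∑ t ∈ ST.2, (t : ℚ)

/-- The degree operator `d` of the representation `π` on `V`:
`d (f ⊗ v_{S,T} ⊗ e^{pα}) = (-wt(f) - deg(v_{S,T}) - p²/2) ⬝ (f ⊗ v_{S,T} ⊗ e^{pα})`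
on monomials `f`. -/
noncomputable def dV : VV → VV := fun u =>
  u.sum fun STp f =>
    Finsupp.single STp
      (∑ μ ∈ f.support,
        monomial μ
          ((((-(wtMon μ) - degWedge STp.1 - (STp.2 : ℚ) ^ 2 / 2 : ℚ) : ℂ)) * coeff μ f))

/-- The vacuum space `Ω = Λ ⊗ ℂ[ℤα]`, with basis `{v_{S,T} ⊗ e^{pα}}`. -/
abbrev Vac : Type := ((Finset ℕ+ × Finset ℕ+) × ℤ) →₀ ℂ

/-- `embVac w p` is the element `w ⊗ e^{pα}` of `Ω` for `w ∈ Λ`. -/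
noncomputable def embVac (w : Wedge) (p : ℤ) : Vac :=
  w.sum fun ST c => Finsupp.single (ST, p) c

/-- The operator `Z⁺(m)` on `Ω`: `Z⁺(m)(v ⊗ e^{pα}) = A(m-p-1/2)v ⊗ e^{(p+1)α}`. -/
noncomputable def Zplus (m : ℤ) : Vac → Vac := fun u =>
  u.sum fun STp c => c • embVac (Abasis ((m : ℚ) - STp.2 - 1/2) STp.1) (STp.2 + 1)

/-- The operator `Z⁻(m)` on `Ω`: `Z⁻(m)(v ⊗ e^{pα}) = A*(m+p-1/2)v ⊗ e^{(p-1)α}`. -/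
noncomputable def Zminus (m : ℤ) : Vac → Vac := fun u =>
  u.sum fun STp c => c • embVac (AstarBasis ((m : ℚ) + STp.2 - 1/2) STp.1) (STp.2 - 1)

/-- Extension to `V = F ⊗ Λ ⊗ ℂ[ℤα]` of an operator `e` on the Fock factor,
i.e. `e ⊗ 1 ⊗ 1`. -/
noncomputable def extF (e : EndF) : VV → VV := fun u =>
  u.sum fun STp f => Finsupp.single STp (e f)

/-- The operator `Z⁺(m) = Σ_{a,b≥0} (d⁻_a ⊗ 1 ⊗ 1) ∘ X(m+a-b) ∘ (c⁻_b ⊗ 1 ⊗ 1)` on `V`,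
the coefficient of `z^{-m}` in `E⁻₊(z) X(z) E⁻₋(z)` (only finitely many summands act
nontrivially on each vector). -/
noncomputable def ZplusV (m : ℤ) : VV → VV := fun u =>
  ∑ᶠ ab : ℕ × ℕ,
    extF (dOp false ab.1) (Xop (m + (ab.1 : ℤ) - (ab.2 : ℤ)) (extF (cOp false ab.2) u))

/-- The operator `Z⁻(m) = Σ_{a,b≥0} (d⁺_a ⊗ 1 ⊗ 1) ∘ Y(m+a-b) ∘ (c⁺_b ⊗ 1 ⊗ 1)` on `V`,
the coefficient of `z^{-m}` in `E⁺₊(z) Y(z) E⁺₋(z)`. -/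
noncomputable def ZminusV (m : ℤ) : VV → VV := fun u =>
  ∑ᶠ ab : ℕ × ℕ,
    extF (dOp true ab.1) (Yop (m + (ab.1 : ℤ) - (ab.2 : ℤ)) (extF (cOp true ab.2) u))

/-- `Ncount j` is the number of quadruples `(a, S, T, p)` with `a : ℤ_{≥1} → ℤ_{≥0}`
finitely supported, `S, T` finite subsets of the positive integers and `p ∈ ℤ`,
satisfying `2 Σ_{n≥1} n a(n) + 2 (Σ_{s∈S} s + Σ_{t∈T} t) + p² = j`; this is the
dimension of the eigenspace of `d` with eigenvalue `-j/2` on `V`. -/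
noncomputable def Ncount (j : ℕ) : ℕ :=
  Nat.card {q : (ℕ+ →₀ ℕ) × Finset ℕ+ × Finset ℕ+ × ℤ //
    2 * (q.1.sum fun n a => (n : ℤ) * a) +
      2 * ((∑ s ∈ q.2.1, (s : ℤ)) + ∑ t ∈ q.2.2.1, (t : ℤ)) + q.2.2.2 ^ 2 = (j : ℤ)}



lemma den_half (z : ℤ) : ((z:ℚ) - 1/2).den = 2 := by
  rw [show (z:ℚ) - 1/2 = ((2*z-1 : ℤ) : ℚ)/((2:ℤ):ℚ) by push_cast; ring]
  have := Rat.den_div_eq_of_coprime (a := 2*z-1) (b := 2) (by norm_num)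
    (by rw [show Int.natAbs 2 = 2 from rfl, Nat.coprime_two_right, Int.natAbs_odd]
        exact ⟨z - 1, by ring⟩)
  exact_mod_cast this

lemma floor_half (z : ℤ) : ⌊(z:ℚ) - 1/2⌋ = z - 1 := by
  rw [show (z:ℚ) - 1/2 = (-1/2 : ℚ) + z by ring, Int.floor_add_intCast]
  norm_num; omega

lemma AstarBasis_den {m : ℚ} (h : m.den ≠ 2) (ST : Finset ℕ+ × Finset ℕ+) :
    AstarBasis m ST = 0 := by simp [AstarBasis, h]

lemma AstarBasis_mid {m : ℚ} (h1 : ¬ 1 ≤ ⌊m⌋) (h2 : ¬ ⌊m⌋ ≤ -2)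
    (ST : Finset ℕ+ × Finset ℕ+) : AstarBasis m ST = 0 := by
  unfold AstarBasis
  by_cases hd : m.den = 2
  · rw [if_pos hd, dif_neg h1, dif_neg h2]
  · rw [if_neg hd]

lemma AstarBasis_pos {m : ℚ} (hden : m.den = 2) {N : ℤ} (hN : ⌊m⌋ = N) (h1 : 1 ≤ N)
    {s : ℕ+} (hs : (s:ℕ) = N.toNat) (S T : Finset ℕ+) :
    AstarBasis m (S, T) = if s ∈ S then
      ((N : ℂ) * (-1) ^ ((S.filter (s < ·)).card)) • Finsupp.single (S.erase s, T) (1:ℂ)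
    else 0 := by
  subst hN
  have hs' : (⟨⌊m⌋.toNat, by omega⟩ : ℕ+) = s := Subtype.ext hs.symm
  unfold AstarBasis
  rw [if_pos hden, dif_pos h1, hs']

lemma AstarBasis_neg {m : ℚ} (hden : m.den = 2) {N : ℤ} (hN : ⌊m⌋ = N) (h2 : N ≤ -2)
    {k : ℕ+} (hk : (k:ℕ) = (-N - 1).toNat) (S T : Finset ℕ+) :
    AstarBasis m (S, T) = if k ∈ T then 0 else
      ((N : ℂ) * (-1) ^ (S.card + (-N - 1).toNat - (T.filter (· < k)).card)) •
        Finsupp.single (S, insert k T) (1:ℂ) := by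
  subst hN
  have h1 : ¬ 1 ≤ ⌊m⌋ := by omega
  have hk' : (⟨(-⌊m⌋ - 1).toNat, by omega⟩ : ℕ+) = k := Subtype.ext hk.symm
  unfold AstarBasis
  rw [if_pos hden, dif_neg h1, dif_pos h2, hk']

lemma AstarOp_single (x : ℚ) (ST : Finset ℕ+ × Finset ℕ+) (c : ℂ) :
    AstarOp x (Finsupp.single ST c) = c • AstarBasis x ST := by
  simp [AstarOp]

lemma AstarOp_of_forall_zero {y : ℚ} (h : ∀ ST, AstarBasis y ST = 0) (w : Wedge) :
    AstarOp y w = 0 := by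
  rw [AstarOp, Finsupp.lsum_apply]
  exact Finset.sum_eq_zero fun ST _ => by simp [h ST]

lemma AstarBasis_degen {y : ℚ} (h : ¬(y.den = 2 ∧ (1 ≤ ⌊y⌋ ∨ ⌊y⌋ ≤ -2)))
    (ST : Finset ℕ+ × Finset ℕ+) : AstarBasis y ST = 0 := by
  by_cases hd : y.den = 2
  · exact AstarBasis_mid (fun hc => h ⟨hd, Or.inl hc⟩) (fun hc => h ⟨hd, Or.inr hc⟩) ST
  · exact AstarBasis_den hd ST

lemma filt_lt (T : Finset ℕ+) (k : ℕ+) : (T.filter (· < k)).card < (k:ℕ) := by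
  have h1 : (T.filter (· < k)).card ≤ (Finset.Ico 1 (k:ℕ)).card := by
    refine Finset.card_le_card_of_injOn (fun s => (s:ℕ)) ?_ ?_
    · intro s hs
      have hs' := (Finset.mem_filter.1 hs).2
      have h2 : (s:ℕ) < (k:ℕ) := by exact_mod_cast hs'
      exact Finset.mem_Ico.2 ⟨s.one_le, h2⟩
    · exact fun s _ t _ h => PNat.coe_injective h
  rw [Nat.card_Ico] at h1
  have := k.pos
  omega

lemma pow_neg_one_succ {a b : ℕ} (h : a + 1 = b) : ((-1:ℂ))^b = -(-1)^a := by
  subst h; rw [pow_succ]; ring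

lemma anticomm (x y : ℚ) (ST : Finset ℕ+ × Finset ℕ+) :
    AstarOp x (AstarBasis y ST) + AstarOp y (AstarBasis x ST) = 0 := by
  by_cases hgy : y.den = 2 ∧ (1 ≤ ⌊y⌋ ∨ ⌊y⌋ ≤ -2)
  swap
  · rw [AstarBasis_degen hgy ST, map_zero,
      AstarOp_of_forall_zero (AstarBasis_degen hgy), zero_add]
  by_cases hgx : x.den = 2 ∧ (1 ≤ ⌊x⌋ ∨ ⌊x⌋ ≤ -2)
  swap
  · rw [AstarBasis_degen hgx ST, map_zero,
      AstarOp_of_forall_zero (AstarBasis_degen hgx), add_zero]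
  wlog hxy : ⌊x⌋ ≤ ⌊y⌋ generalizing x y with H
  · rw [add_comm]; exact H y x hgx hgy (by omega)
  obtain ⟨S, T⟩ := ST
  obtain ⟨hdy, hcy⟩ := hgy
  obtain ⟨hdx, hcx⟩ := hgx
  rcases hcx with h1x | h2x
  · -- Case A : both positive
    have h1y : 1 ≤ ⌊y⌋ := by omega
    obtain ⟨sx, hsxv⟩ : ∃ s : ℕ+, (s:ℕ) = ⌊x⌋.toNat := ⟨⟨⌊x⌋.toNat, by omega⟩, rfl⟩
    obtain ⟨sy, hsyv⟩ : ∃ s : ℕ+, (s:ℕ) = ⌊y⌋.toNat := ⟨⟨⌊y⌋.toNat, by omega⟩, rfl⟩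
    rw [AstarBasis_pos hdy rfl h1y hsyv S T,
        AstarBasis_pos hdx rfl h1x hsxv S T]
    by_cases hys : sy ∈ S
    swap
    · rw [if_neg hys, map_zero, zero_add]
      by_cases hxs : sx ∈ S
      · rw [if_pos hxs, map_smul, AstarOp_single, one_smul,
          AstarBasis_pos hdy rfl h1y hsyv (S.erase sx) T,
          if_neg (fun hc => hys (Finset.mem_of_mem_erase hc)), smul_zero]
      · rw [if_neg hxs, map_zero]
    rw [if_pos hys]
    by_cases hxs : sx ∈ S
    swap
    · rw [if_neg hxs, map_zero, add_zero, map_smul, AstarOp_single, one_smul,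
        AstarBasis_pos hdx rfl h1x hsxv (S.erase sy) T,
        if_neg (fun hc => hxs (Finset.mem_of_mem_erase hc)), smul_zero]
    rw [if_pos hxs]
    by_cases hee : sx = sy
    · subst hee
      rw [map_smul, map_smul, AstarOp_single, AstarOp_single, one_smul, one_smul,
        AstarBasis_pos hdx rfl h1x hsxv (S.erase sx) T,
        AstarBasis_pos hdy rfl h1y (by omega : ((sx:ℕ) = ⌊y⌋.toNat)) (S.erase sx) T,
        if_neg (Finset.notMem_erase sx S), if_neg (Finset.notMem_erase sx S),
        smul_zero, smul_zero, add_zero]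
    have hlt : sx < sy := by
      have h3 : (sx:ℕ) ≠ (sy:ℕ) := fun h => hee (Subtype.ext h)
      have : (sx:ℕ) < (sy:ℕ) := by omega
      exact_mod_cast this
    rw [map_smul, map_smul, AstarOp_single, AstarOp_single, one_smul, one_smul,
      AstarBasis_pos hdx rfl h1x hsxv (S.erase sy) T,
      AstarBasis_pos hdy rfl h1y hsyv (S.erase sx) T,
      if_pos (Finset.mem_erase.2 ⟨hee, hxs⟩),
      if_pos (Finset.mem_erase.2 ⟨fun h => hee h.symm, hys⟩),
      smul_smul, smul_smul, Finset.erase_right_comm (a := sy) (b := sx), ← add_smul]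
    apply smul_eq_zero_of_left
    have e2 : ((S.erase sx).filter (sy < ·)) = S.filter (sy < ·) := by
      rw [Finset.filter_erase, Finset.erase_eq_of_notMem]
      simp only [Finset.mem_filter]
      rintro ⟨-, hc⟩
      exact absurd (hlt.trans hc) (lt_irrefl sx)
    have e1 : ((S.erase sy).filter (sx < ·)).card + 1 = (S.filter (sx < ·)).card := by
      rw [Finset.filter_erase, Finset.card_erase_of_mem (Finset.mem_filter.2 ⟨hys, hlt⟩)]
      have h0 : 1 ≤ (S.filter (fun z => sx < z)).card :=
        Finset.card_pos.2 ⟨sy, Finset.mem_filter.2 ⟨hys, hlt⟩⟩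
      exact Nat.sub_add_cancel h0
    rw [e2, pow_neg_one_succ e1]
    ring
  · rcases hcy with h1y | h2y
    · -- Case B: x negative, y positive
      obtain ⟨kx, hkxv⟩ : ∃ k : ℕ+, (k:ℕ) = (-⌊x⌋-1).toNat := ⟨⟨(-⌊x⌋-1).toNat, by omega⟩, rfl⟩
      obtain ⟨sy, hsyv⟩ : ∃ s : ℕ+, (s:ℕ) = ⌊y⌋.toNat := ⟨⟨⌊y⌋.toNat, by omega⟩, rfl⟩
      rw [AstarBasis_pos hdy rfl h1y hsyv S T, AstarBasis_neg hdx rfl h2x hkxv S T]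
      by_cases hkt : kx ∈ T
      · rw [if_pos hkt, map_zero, add_zero]
        by_cases hys : sy ∈ S
        · rw [if_pos hys, map_smul, AstarOp_single, one_smul,
            AstarBasis_neg hdx rfl h2x hkxv (S.erase sy) T, if_pos hkt, smul_zero]
        · rw [if_neg hys, map_zero]
      rw [if_neg hkt]
      by_cases hys : sy ∈ S
      swap
      · rw [if_neg hys, map_zero, zero_add, map_smul, AstarOp_single, one_smul,
          AstarBasis_pos hdy rfl h1y hsyv S (insert kx T), if_neg hys, smul_zero]
      rw [if_pos hys, map_smul, map_smul, AstarOp_single, AstarOp_single, one_smul, one_smul,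
        AstarBasis_neg hdx rfl h2x hkxv (S.erase sy) T,
        AstarBasis_pos hdy rfl h1y hsyv S (insert kx T),
        if_neg hkt, if_pos hys, smul_smul, smul_smul, ← add_smul]
      apply smul_eq_zero_of_left
      have hflt : (T.filter (· < kx)).card < (kx:ℕ) := filt_lt T kx
      have e1 : ((S.erase sy).card + (-⌊x⌋ - 1).toNat - (T.filter (· < kx)).card) + 1
          = S.card + (-⌊x⌋ - 1).toNat - (T.filter (· < kx)).card := by
        rw [Finset.card_erase_of_mem hys]
        have h0 : 1 ≤ S.card := Finset.card_pos.2 ⟨sy, hys⟩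
        omega
      rw [pow_neg_one_succ e1]
      ring
    · -- Case C: both negative
      obtain ⟨kx, hkxv⟩ : ∃ k : ℕ+, (k:ℕ) = (-⌊x⌋-1).toNat := ⟨⟨(-⌊x⌋-1).toNat, by omega⟩, rfl⟩
      obtain ⟨ky, hkyv⟩ : ∃ k : ℕ+, (k:ℕ) = (-⌊y⌋-1).toNat := ⟨⟨(-⌊y⌋-1).toNat, by omega⟩, rfl⟩
      rw [AstarBasis_neg hdy rfl h2y hkyv S T, AstarBasis_neg hdx rfl h2x hkxv S T]
      by_cases hyt : ky ∈ T
      · rw [if_pos hyt, map_zero, zero_add]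
        by_cases hxt : kx ∈ T
        · rw [if_pos hxt, map_zero]
        · rw [if_neg hxt, map_smul, AstarOp_single, one_smul,
            AstarBasis_neg hdy rfl h2y hkyv S (insert kx T),
            if_pos (Finset.mem_insert_of_mem hyt), smul_zero]
      rw [if_neg hyt]
      by_cases hxt : kx ∈ T
      · rw [if_pos hxt, map_zero, add_zero, map_smul, AstarOp_single, one_smul,
          AstarBasis_neg hdx rfl h2x hkxv S (insert ky T),
          if_pos (Finset.mem_insert_of_mem hxt), smul_zero]
      rw [if_neg hxt]
      by_cases hee : kx = ky
      · subst hee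
        rw [map_smul, map_smul, AstarOp_single, AstarOp_single, one_smul, one_smul,
          AstarBasis_neg hdx rfl h2x hkxv S (insert kx T),
          AstarBasis_neg hdy rfl h2y hkyv S (insert kx T),
          if_pos (Finset.mem_insert_self kx T), if_pos (Finset.mem_insert_self kx T),
          smul_zero, smul_zero, add_zero]
      have hlt : ky < kx := by
        have h3 : (kx:ℕ) ≠ (ky:ℕ) := fun h => hee (Subtype.ext h)
        have : (ky:ℕ) < (kx:ℕ) := by omega
        exact_mod_cast this
      have hx' : kx ∉ insert ky T := by
        simp only [Finset.mem_insert]; push_neg; exact ⟨hee, hxt⟩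
      have hy' : ky ∉ insert kx T := by
        simp only [Finset.mem_insert]; push_neg; exact ⟨fun h => hee h.symm, hyt⟩
      rw [map_smul, map_smul, AstarOp_single, AstarOp_single, one_smul, one_smul,
        AstarBasis_neg hdx rfl h2x hkxv S (insert ky T),
        AstarBasis_neg hdy rfl h2y hkyv S (insert kx T),
        if_neg hx', if_neg hy', smul_smul, smul_smul,
        Finset.insert_comm ky kx T, ← add_smul]
      apply smul_eq_zero_of_left
      have hfx : (T.filter (· < kx)).card < (kx:ℕ) := filt_lt T kx
      have ecard : ((insert ky T).filter (· < kx)).card = (T.filter (· < kx)).card + 1 := by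
        rw [Finset.filter_insert, if_pos hlt,
          Finset.card_insert_of_notMem (fun hc => hyt (Finset.mem_filter.1 hc).1)]
      have e2y : ((insert kx T).filter (· < ky)) = T.filter (· < ky) := by
        rw [Finset.filter_insert, if_neg (not_lt.2 hlt.le)]
      have e1 : (S.card + (-⌊x⌋ - 1).toNat - ((insert ky T).filter (· < kx)).card) + 1
          = S.card + (-⌊x⌋ - 1).toNat - (T.filter (· < kx)).card := by
        rw [ecard]; omega
      rw [e2y, pow_neg_one_succ e1]
      ring

lemma embVac_def (w : Wedge) (p : ℤ) :
    embVac w p = Finsupp.mapDomain (fun ST => (ST, p)) w := rfl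

lemma embVac_add (w1 w2 : Wedge) (p : ℤ) :
    embVac (w1 + w2) p = embVac w1 p + embVac w2 p := by
  simp only [embVac_def]; exact Finsupp.mapDomain_add

lemma embVac_zero (p : ℤ) : embVac 0 p = 0 := by
  simp only [embVac_def]; exact Finsupp.mapDomain_zero

lemma embVac_smul (c : ℂ) (w : Wedge) (p : ℤ) :
    embVac (c • w) p = c • embVac w p := by
  simp only [embVac_def]; exact Finsupp.mapDomain_smul c w

lemma embVac_single (ST : Finset ℕ+ × Finset ℕ+) (c : ℂ) (p : ℤ) :
    embVac (Finsupp.single ST c) p = Finsupp.single (ST, p) c := by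
  simp only [embVac_def]; exact Finsupp.mapDomain_single

lemma Zminus_add (a : ℤ) (u v : Vac) : Zminus a (u + v) = Zminus a u + Zminus a v := by
  unfold Zminus
  exact Finsupp.sum_add_index' (fun STp => zero_smul ℂ _)
    (fun STp c1 c2 => add_smul c1 c2 _)

lemma Zminus_single (a : ℤ) (ST : Finset ℕ+ × Finset ℕ+) (q : ℤ) (c : ℂ) :
    Zminus a (Finsupp.single (ST, q) c)
      = c • embVac (AstarBasis ((a:ℚ) + q - 1/2) ST) (q - 1) :=
  Finsupp.sum_single_index (zero_smul ℂ _)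

lemma Zminus_zero (a : ℤ) : Zminus a 0 = 0 := Finsupp.sum_zero_index

lemma Zminus_embVac (a : ℤ) (w : Wedge) (q : ℤ) :
    Zminus a (embVac w q) = embVac (AstarOp ((a:ℚ) + q - 1/2) w) (q - 1) := by
  induction w using Finsupp.induction_linear with
  | zero => rw [embVac_zero, Zminus_zero, map_zero, embVac_zero]
  | add f g hf hg => rw [embVac_add, Zminus_add, hf, hg, map_add, embVac_add]
  | single ST c =>
      rw [embVac_single, Zminus_single, AstarOp_single, embVac_smul]

noncomputable def Gfun (c0 : ℚ) (S T : Finset ℕ+) (p : ℤ) (y : ℚ) : Vac :=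
  embVac (AstarOp (c0 - y) (AstarBasis y (S, T))) (p - 2)

lemma Gfun_anti (c0 : ℚ) (S T : Finset ℕ+) (p : ℤ) (y : ℚ) :
    Gfun c0 S T p y + Gfun c0 S T p (c0 - y) = 0 := by
  unfold Gfun
  rw [sub_sub_cancel, ← embVac_add, anticomm, embVac_zero]

lemma Zm_step (S T : Finset ℕ+) (p : ℤ) (a b : ℤ) (c0 : ℚ)
    (hc : c0 = (a:ℚ) + b + 2*p - 2) (y : ℚ) (hy : y = (b:ℚ) + p - 1/2) :
    Zminus a (Zminus b (Finsupp.single ((S,T), p) 1)) = Gfun c0 S T p y := by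
  rw [Zminus_single, one_smul, Zminus_embVac]
  have h1 : ((a:ℚ) + ((p - 1 : ℤ):ℚ) - 1/2) = c0 - y := by
    rw [hc, hy]; push_cast; ring
  have h2 : ((b:ℚ) + (p:ℚ) - 1/2) = y := by rw [hy]
  have h3 : (p - 1 - 1 : ℤ) = p - 2 := by ring
  rw [h1, h2, h3, Gfun]

lemma AstarBasis_big {y : ℚ} {z : ℤ} (hfl : ⌊y⌋ = z) (h1 : 1 ≤ z) (S T : Finset ℕ+)
    (h : ∀ s : ℕ+, s ∈ S → ((s:ℕ):ℤ) < z) : AstarBasis y (S, T) = 0 := by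
  by_cases hd : y.den = 2
  · obtain ⟨s, hsv⟩ : ∃ s : ℕ+, (s:ℕ) = z.toNat := ⟨⟨z.toNat, by omega⟩, rfl⟩
    rw [AstarBasis_pos hd hfl h1 hsv S T, if_neg]
    intro hc
    have := h s hc
    omega
  · exact AstarBasis_den hd _

lemma Gfun_vanish (c0 : ℚ) (S T : Finset ℕ+) (p : ℤ) (z : ℤ) (h1 : 2 ≤ z)
    (hz : ∀ s : ℕ+, s ∈ S → ((s:ℕ):ℤ) + 1 < z) :
    Gfun c0 S T p ((z:ℚ) - 1/2) = 0 := by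
  unfold Gfun
  rw [AstarBasis_big (floor_half z) (by omega) S T (fun s hs => by have := hz s hs; omega),
    map_zero, embVac_zero]

lemma term_vanish (S T : Finset ℕ+) (p : ℤ) (c0 : ℚ) (q : ℤ) (k : ℕ)
    (hk : (((S.sup fun a => (a:ℕ)) : ℕ) : ℤ) + 2 - q - p ≤ k) :
    Gfun c0 S T p ((q:ℚ) + p - 1/2 + k) = 0 := by
  have harg : (q:ℚ) + p - 1/2 + k = ((q + p + k : ℤ):ℚ) - 1/2 := by push_cast; ring
  rw [harg]
  apply Gfun_vanish
  · omega
  · intro s hs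
    have hsB : (s:ℕ) ≤ S.sup (fun a => (a:ℕ)) := Finset.le_sup (f := fun (a : ℕ+) => (a:ℕ)) hs
    omega

lemma fin_lemma (m n : ℤ) (S T : Finset ℕ+) (p : ℤ) :
    {k : ℕ | Zminus (m - k) (Zminus (n + k) (Finsupp.single ((S,T), p) 1)) ≠ 0}.Finite := by
  apply Set.Finite.subset
    (Set.finite_Iio ((((S.sup fun a => (a:ℕ)) : ℕ) : ℤ) + 2 - n - p).toNat)
  intro k hk
  simp only [Set.mem_setOf_eq] at hk
  simp only [Set.mem_Iio]
  by_contra hc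
  apply hk
  rw [Zm_step S T p (m - k) (n + k) (((m - k : ℤ):ℚ) + ((n + k : ℤ):ℚ) + 2*p - 2) rfl
      (((n:ℚ) + p - 1/2 + k)) (by push_cast; ring)]
  exact term_vanish S T p _ n k (by omega)

lemma sums_eq (m n : ℤ) (h : n ≤ m) (S T : Finset ℕ+) (p : ℤ) :
    ∑ᶠ k : ℕ, Zminus (m - k) (Zminus (n + k) (Finsupp.single ((S,T), p) 1)) =
    ∑ᶠ k : ℕ, Zminus (n - k) (Zminus (m + k) (Finsupp.single ((S,T), p) 1)) := by
  set c0 : ℚ := (m:ℚ) + n + 2*p - 2 with hc0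
  set B : ℕ := S.sup (fun a => (a:ℕ)) with hB
  set d : ℕ := (m - n).toNat with hd
  have hdq : (d:ℚ) = (m:ℚ) - n := by
    have h' : ((d:ℕ):ℤ) = m - n := Int.toNat_of_nonneg (by omega)
    exact_mod_cast h'
  have t1 : ∀ k : ℕ, Zminus (m - k) (Zminus (n + k) (Finsupp.single ((S,T), p) 1))
      = Gfun c0 S T p ((n:ℚ) + p - 1/2 + k) := fun k =>
    Zm_step S T p _ _ _ (by push_cast; ring) _ (by push_cast; ring)
  have t2 : ∀ k : ℕ, Zminus (n - k) (Zminus (m + k) (Finsupp.single ((S,T), p) 1))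
      = Gfun c0 S T p ((m:ℚ) + p - 1/2 + k) := fun k =>
    Zm_step S T p _ _ _ (by push_cast; ring) _ (by push_cast; ring)
  set K₁ : ℕ := ((B:ℤ) + 2 - n - p).toNat with hK₁
  set K₂ : ℕ := ((B:ℤ) + 2 - m - p).toNat with hK₂
  set K : ℕ := K₁ + K₂ with hK
  have hsupp1 : (Function.support fun k : ℕ => Gfun c0 S T p ((n:ℚ) + p - 1/2 + k))
      ⊆ ↑(Finset.range (d + K)) := by
    intro k hk
    simp only [Function.mem_support] at hk
    simp only [Finset.coe_range, Set.mem_Iio]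
    by_contra hc
    exact hk (term_vanish S T p c0 n k (by omega))
  have hsupp2 : (Function.support fun k : ℕ => Gfun c0 S T p ((m:ℚ) + p - 1/2 + k))
      ⊆ ↑(Finset.range K) := by
    intro k hk
    simp only [Function.mem_support] at hk
    simp only [Finset.coe_range, Set.mem_Iio]
    by_contra hc
    exact hk (term_vanish S T p c0 m k (by omega))
  rw [finsum_congr t1, finsum_congr t2,
    finsum_eq_sum_of_support_subset _ hsupp1, finsum_eq_sum_of_support_subset _ hsupp2,
    Finset.sum_range_add]
  have hrefl : ∀ j ∈ Finset.range d,
      Gfun c0 S T p ((n:ℚ) + p - 1/2 + j) + Gfun c0 S T p ((n:ℚ) + p - 1/2 + (d - 1 - j : ℕ)) = 0 := by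
    intro j hj
    have hj' : j < d := Finset.mem_range.1 hj
    have harg : (n:ℚ) + p - 1/2 + ((d - 1 - j : ℕ) : ℚ) = c0 - ((n:ℚ) + p - 1/2 + j) := by
      have hcast : ((d - 1 - j : ℕ) : ℚ) = (d:ℚ) - 1 - j := by
        have : ((d - 1 - j : ℕ) : ℤ) = (d:ℤ) - 1 - j := by omega
        exact_mod_cast this
      rw [hcast, hdq, hc0]; ring
    rw [harg]
    exact Gfun_anti c0 S T p _
  have hzero : ∑ j ∈ Finset.range d, Gfun c0 S T p ((n:ℚ) + p - 1/2 + j) = 0 := by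
    set Sd := ∑ j ∈ Finset.range d, Gfun c0 S T p ((n:ℚ) + p - 1/2 + j) with hSd
    have h2 : Sd + Sd = 0 := by
      nth_rewrite 2 [hSd]
      rw [← Finset.sum_range_reflect (fun j => Gfun c0 S T p ((n:ℚ) + p - 1/2 + j)) d,
        hSd, ← Finset.sum_add_distrib]
      exact Finset.sum_eq_zero hrefl
    have h3 : (2:ℂ) • Sd = 0 := by rw [two_smul]; exact h2
    rcases smul_eq_zero.mp h3 with h4 | h4
    · norm_num at h4
    · exact h4
  rw [hzero, zero_add]
  apply Finset.sum_congr rfl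
  intro k _
  congr 1
  push_cast
  rw [hdq]
  ring

theorem statement14 (m n : ℤ) (S T : Finset ℕ+) (p : ℤ) (w : Vac)
    (hw : w = Finsupp.single ((S, T), p) 1) :
    {k : ℕ | Zminus (m - k) (Zminus (n + k) w) ≠ 0}.Finite ∧
    {k : ℕ | Zminus (n - k) (Zminus (m + k) w) ≠ 0}.Finite ∧
    ∑ᶠ k : ℕ, Zminus (m - k) (Zminus (n + k) w) =
      ∑ᶠ k : ℕ, Zminus (n - k) (Zminus (m + k) w) := by
  subst hw
  exact ⟨fin_lemma m n S T p, fin_lemma n m S T p, by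
    rcases le_total n m with h | h
    · exact sums_eq m n h S T p
    · exact (sums_eq n m h S T p).symm⟩
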